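/- Let η : Ω → ℝ³ be a C¹ vector field with det(∇η + I) = 1. Then div η = div Ψ(η), where Ψ(η) is the explicit quadratic-cubic vector field Ψ(η) = -( η₁(∂₂η₂+∂₃η₃) - η₁(∂₂η₃∂₃η₂ - ∂₂η₂∂₃η₃), η₂∂₃η₃ - η₁∂₁η₂ - η₁(∂₁η₂∂₃η₃ - ∂₁η₃∂₃η₂), -η₁∂₁η₃ - η₂∂₂η₃ - η₁(∂₁η₃∂₂η₂ - ∂₁η₂∂₂η₃) )ᵀ. -/

import Mathlib

open MeasureTheory Matrix Set

noncomputable section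

abbrev V3 := Fin 3 → ℝ

/-- Partial derivative `∂_j f` of a scalar function on ℝ³. -/
def pd (j : Fin 3) (f : V3 → ℝ) : V3 → ℝ := fun y => fderiv ℝ f y (Pi.single j 1)

def jac (ζ : V3 → V3) (y : V3) : Matrix (Fin 3) (Fin 3) ℝ :=
  Matrix.of fun i j => fderiv ℝ ζ y (Pi.single j 1) i

/-- The explicit quadratic–cubic vector field `Ψ(η)` from the paper.
Here `D l j = ∂_j η_l`. -/
def Psi (η : V3 → V3) (y : V3) : V3 :=
  let e : V3 := η y
  let D : Fin 3 → Fin 3 → ℝ := fun l j => fderiv ℝ η y (Pi.single j 1) l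
  ![ -(e 0 * (D 1 1 + D 2 2) - e 0 * (D 2 1 * D 1 2 - D 1 1 * D 2 2)),
     -(e 1 * D 2 2 - e 0 * D 1 0 - e 0 * (D 1 0 * D 2 2 - D 2 0 * D 1 2)),
     -(-(e 0 * D 2 0) - e 1 * D 2 1 - e 0 * (D 2 0 * D 1 1 - D 1 0 * D 2 1)) ]

/-- if `det(∇η + I) = 1` then `div η = div Ψ(η)`. -/
theorem stmt4 (η : V3 → V3)
    (hη : ContDiff ℝ 2 η)
    (hdet : ∀ y, (jac η y + 1).det = 1) :
    ∀ y : V3, (∑ i, pd i (fun z => η z i) y) = ∑ i, pd i (fun z => Psi η z i) y := by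
  intro y
  have hηd : DifferentiableAt ℝ η y := (hη.differentiable (by norm_num)).differentiableAt
  have hFd : DifferentiableAt ℝ (fderiv ℝ η) y :=
    ((hη.fderiv_right (m := 1) (by norm_num)).differentiable one_ne_zero).differentiableAt
  have he : ∀ l : Fin 3, HasFDerivAt (fun z => η z l)
      ((ContinuousLinearMap.proj l).comp (fderiv ℝ η y)) y := by
    intro l
    have h := (ContinuousLinearMap.proj (R := ℝ) (φ := fun _ : Fin 3 => ℝ) l).hasFDerivAt.comp y
      hηd.hasFDerivAt
    exact h
  have hg : ∀ l j : Fin 3, HasFDerivAt (fun z => fderiv ℝ η z (Pi.single j 1) l)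
      ((ContinuousLinearMap.proj l).comp
        ((ContinuousLinearMap.apply ℝ V3 (Pi.single j 1)).comp (fderiv ℝ (fderiv ℝ η) y))) y := by
    intro l j
    have h := (ContinuousLinearMap.proj (R := ℝ) (φ := fun _ : Fin 3 => ℝ) l).hasFDerivAt.comp y
      ((ContinuousLinearMap.apply ℝ V3 (Pi.single j 1)).hasFDerivAt.comp y hFd.hasFDerivAt)
    exact h
  have hs : ∀ l j k : Fin 3,
      fderiv ℝ (fderiv ℝ η) y (Pi.single k 1) (Pi.single j 1) l =
      fderiv ℝ (fderiv ℝ η) y (Pi.single j 1) (Pi.single k 1) l := by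
    intro l j k
    have h := ((hη.contDiffAt (x := y)).isSymmSndFDerivAt (by norm_num)) (Pi.single k 1) (Pi.single j 1)
    exact congrFun h l
  have hf0 : (fun z => Psi η z 0) = fun z =>
      -(η z 0 * (fderiv ℝ η z (Pi.single 1 1) 1 + fderiv ℝ η z (Pi.single 2 1) 2) -
        η z 0 * (fderiv ℝ η z (Pi.single 1 1) 2 * fderiv ℝ η z (Pi.single 2 1) 1 -
                 fderiv ℝ η z (Pi.single 1 1) 1 * fderiv ℝ η z (Pi.single 2 1) 2)) := by
    funext z; simp [Psi]
  have hf1 : (fun z => Psi η z 1) = fun z =>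
      -(η z 1 * fderiv ℝ η z (Pi.single 2 1) 2 - η z 0 * fderiv ℝ η z (Pi.single 0 1) 1 -
        η z 0 * (fderiv ℝ η z (Pi.single 0 1) 1 * fderiv ℝ η z (Pi.single 2 1) 2 -
                 fderiv ℝ η z (Pi.single 0 1) 2 * fderiv ℝ η z (Pi.single 2 1) 1)) := by
    funext z; simp [Psi]
  have hf2 : (fun z => Psi η z 2) = fun z =>
      -(-(η z 0 * fderiv ℝ η z (Pi.single 0 1) 2) - η z 1 * fderiv ℝ η z (Pi.single 1 1) 2 -
        η z 0 * (fderiv ℝ η z (Pi.single 0 1) 2 * fderiv ℝ η z (Pi.single 1 1) 1 -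
                 fderiv ℝ η z (Pi.single 0 1) 1 * fderiv ℝ η z (Pi.single 1 1) 2)) := by
    funext z; simp [Psi]
  have H0 := (((he 0).mul ((hg 1 1).add (hg 2 2))).sub
      ((he 0).mul (((hg 2 1).mul (hg 1 2)).sub ((hg 1 1).mul (hg 2 2))))).neg
  have H1 := ((((he 1).mul (hg 2 2)).sub ((he 0).mul (hg 1 0))).sub
      ((he 0).mul (((hg 1 0).mul (hg 2 2)).sub ((hg 2 0).mul (hg 1 2))))).neg
  have H2 := (((((he 0).mul (hg 2 0)).neg).sub ((he 1).mul (hg 2 1))).sub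
      ((he 0).mul (((hg 2 0).mul (hg 1 1)).sub ((hg 1 0).mul (hg 2 1))))).neg
  have key := hdet y
  simp only [Matrix.det_fin_three, jac, Matrix.add_apply, Matrix.of_apply, Matrix.one_apply,
    Fin.isValue] at key
  norm_num [Fin.ext_iff] at key
  rw [Fin.sum_univ_three, Fin.sum_univ_three]
  simp only [pd]
  erw [hf0, hf1, hf2, H0.fderiv, H1.fderiv, H2.fderiv,
    (he 0).fderiv, (he 1).fderiv, (he 2).fderiv]
  simp only [ContinuousLinearMap.neg_apply, ContinuousLinearMap.sub_apply,
    ContinuousLinearMap.add_apply, ContinuousLinearMap.smul_apply,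
    ContinuousLinearMap.coe_comp', Function.comp_apply, ContinuousLinearMap.proj_apply,
    ContinuousLinearMap.apply_apply, smul_eq_mul, Pi.add_apply, Pi.sub_apply, Pi.mul_apply]
  rw [hs 1 1 0, hs 1 2 0, hs 1 2 1, hs 2 1 0, hs 2 2 0, hs 2 2 1]
  linear_combination key
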